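/- Let (W,𝕎) be an α-Hölder nonlinear rough path with growth index β₂ = (β₀,β₁,β₂), let (Y,Ẏ) ∈ 𝓔_W^{2α}, and let Z_t := ∫_0^t W(dr,Y_r) be the nonlinear rough integral. Then Z is controlled by W with Gubinelli derivative Y, i.e. (Z,Y) ∈ 𝓔_W^{2α}; moreover the remainder R^Z_{s,t} := Z_t − Z_s − W_{s,t}(Y_s) satisfies ‖R^Z‖_{2α} ≤ k_α·‖(W,𝕎)‖_𝒞·(1+2‖Ẏ‖_∞)^{max(β₀,β₁)}·(1+2‖Y‖_∞)^{max(β₁,β₂)}·[1 + T^α·(‖Y‖_α+‖Ẏ‖_α+‖R^Y‖_{2α})], where k_α = (1−2^{1−3α})^{−1}. -/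

import Mathlib

open Set

/-- A partition `s = t₀ < t₁ < ⋯ < t_n = t` of the interval `[s,t]`. -/
structure TimePartition (s t : ℝ) where
  n : ℕ
  pts : ℕ → ℝ
  first : pts 0 = s
  last : pts n = t
  mono : ∀ k < n, pts k < pts (k + 1)

variable {V : Type*} [NormedAddCommGroup V] [NormedSpace ℝ V]

/-- The compensated Riemann–Stieltjes sum
`∑ₖ [W_{t_{k-1},t_k}(Y_{t_{k-1}}) + 𝕎_{t_{k-1},t_k}(Ẏ_{t_{k-1}}, Y_{t_{k-1}})]`. -/
def riemannSum (W : ℝ → V → V) (WW : ℝ → ℝ → V × V → V) (Y Yd : ℝ → V)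
    {s t : ℝ} (P : TimePartition s t) : V :=
  ∑ k ∈ Finset.range P.n,
    ((W (P.pts (k + 1)) (Y (P.pts k)) - W (P.pts k) (Y (P.pts k)))
      + WW (P.pts k) (P.pts (k + 1)) (Yd (P.pts k), Y (P.pts k)))

/-- `(W, 𝕎)` is an α-Hölder nonlinear rough path with growth index `β₂ = (β 0, β 1, β 2)`. -/
def RoughPath2 (T α : ℝ) (β : ℕ → ℝ) (W : ℝ → V → V) (WW : ℝ → ℝ → V × V → V)
    (NW NWW : ℝ) : Prop :=
  (∀ t ∈ Icc (0 : ℝ) T, ContDiff ℝ 2 (W t)) ∧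
  (∀ k ≤ 2, ∀ s ∈ Icc (0 : ℝ) T, ∀ t ∈ Icc (0 : ℝ) T, ∀ x : V,
    ‖iteratedFDeriv ℝ k (fun z => W t z - W s z) x‖
      ≤ NW * |t - s| ^ α * (1 + ‖x‖) ^ (β k)) ∧
  (∀ s ∈ Icc (0 : ℝ) T, ∀ t ∈ Icc (0 : ℝ) T, ContDiff ℝ 1 (WW s t)) ∧
  (∀ s ∈ Icc (0 : ℝ) T, ∀ t ∈ Icc (0 : ℝ) T, ∀ x y : V,
    ‖WW s t (x, y)‖ ≤ NWW * |t - s| ^ (2 * α) * (1 + ‖x‖) ^ (β 0) * (1 + ‖y‖) ^ (β 1)) ∧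
  (∀ s ∈ Icc (0 : ℝ) T, ∀ t ∈ Icc (0 : ℝ) T, ∀ x y : V,
    ‖fderiv ℝ (WW s t) (x, y)‖
      ≤ NWW * |t - s| ^ (2 * α) * (1 + ‖x‖) ^ (max (β 0) (β 1))
          * (1 + ‖y‖) ^ (max (β 1) (β 2))) ∧
  (∀ s ∈ Icc (0 : ℝ) T, ∀ u ∈ Icc (0 : ℝ) T, ∀ t ∈ Icc (0 : ℝ) T, ∀ x y : V,
    WW s t (x, y) - WW s u (x, y) - WW u t (x, y)
      = fderiv ℝ (fun z => W t z - W u z) y (W u x - W s x))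

/-- Mean value inequality with a linearly growing derivative bound. -/
lemma aux_L0 {f f' : ℝ → V} {L c : ℝ}
    (hd : ∀ θ ∈ Icc (0:ℝ) 1, HasDerivAt f (f' θ) θ)
    (hb : ∀ θ ∈ Icc (0:ℝ) 1, ‖f' θ‖ ≤ L * θ + c) :
    ‖f 1 - f 0‖ ≤ L / 2 + c := by
  have hg : ContinuousOn (fun θ => f θ - f 0) (Icc (0:ℝ) 1) := by
    intro x hx
    exact ((hd x hx).continuousAt.continuousWithinAt).sub continuousWithinAt_const
  have hg' : ∀ x ∈ Ico (0:ℝ) 1, HasDerivWithinAt (fun θ => f θ - f 0) (f' x) (Ici x) x := by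
    intro x hx
    exact ((hd x ⟨hx.1, hx.2.le⟩).sub_const (f 0)).hasDerivWithinAt
  have hB : ∀ x : ℝ, HasDerivAt (fun θ : ℝ => L * θ ^ 2 / 2 + c * θ) (L * x + c) x := by
    intro x
    have : HasDerivAt (fun θ : ℝ => L * θ ^ 2 / 2 + c * θ) (L * (2 * x ^ 1) / 2 + c * 1) x := by
      exact (((hasDerivAt_pow 2 x).const_mul L).div_const 2).add ((hasDerivAt_id x).const_mul c)
    convert this using 1; ring
  have key := image_norm_le_of_norm_deriv_right_le_deriv_boundary hg hg'
    (by simp) hB (fun x hx => hb x ⟨hx.1, hx.2.le⟩) (right_mem_Icc.2 zero_le_one)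
  simpa using key

/-- Midpoint mean value inequality: derivative bound `L*|θ-1/2| + c` gives `L/4 + c`. -/
lemma aux_L1 {f f' : ℝ → V} {L c : ℝ}
    (hd : ∀ θ ∈ Icc (0:ℝ) 1, HasDerivAt f (f' θ) θ)
    (hb : ∀ θ ∈ Icc (0:ℝ) 1, ‖f' θ‖ ≤ L * |θ - 1/2| + c) :
    ‖f 1 - f 0‖ ≤ L / 4 + c := by
  have hmem : ∀ σ ∈ Icc (0:ℝ) 1, (1/2 + σ/2) ∈ Icc (0:ℝ) 1 := by
    intro σ hσ; constructor <;> [linarith [hσ.1]; linarith [hσ.2]]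
  have hmem' : ∀ σ ∈ Icc (0:ℝ) 1, (1/2 - σ/2) ∈ Icc (0:ℝ) 1 := by
    intro σ hσ; constructor <;> [linarith [hσ.2]; linarith [hσ.1]]
  have hr : ∀ σ ∈ Icc (0:ℝ) 1,
      HasDerivAt (fun σ : ℝ => f (1/2 + σ/2)) ((1/2 : ℝ) • f' (1/2 + σ/2)) σ := by
    intro σ hσ
    have h1 : HasDerivAt (fun σ : ℝ => 1/2 + σ/2) (1/2) σ := by
      simpa using ((hasDerivAt_id σ).div_const 2).const_add (1/2 : ℝ)
    simpa [mul_comm, Function.comp_def] using (hd _ (hmem σ hσ)).scomp σ h1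
  have hl : ∀ σ ∈ Icc (0:ℝ) 1,
      HasDerivAt (fun σ : ℝ => f (1/2 - σ/2)) ((-(1/2) : ℝ) • f' (1/2 - σ/2)) σ := by
    intro σ hσ
    have h1 : HasDerivAt (fun σ : ℝ => 1/2 - σ/2) (-(1/2)) σ := by
      simpa using ((hasDerivAt_id σ).div_const 2).const_sub (1/2 : ℝ)
    simpa [mul_comm, Function.comp_def] using (hd _ (hmem' σ hσ)).scomp σ h1
  have hrb : ∀ σ ∈ Icc (0:ℝ) 1, ‖(1/2 : ℝ) • f' (1/2 + σ/2)‖ ≤ (L/4) * σ + c/2 := by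
    intro σ hσ
    rw [norm_smul]
    have hb' := hb _ (hmem σ hσ)
    have habs : |(1/2 + σ/2) - 1/2| = σ/2 := by
      rw [show (1/2 + σ/2) - 1/2 = σ/2 by ring, abs_of_nonneg (by linarith [hσ.1])]
    rw [habs] at hb'
    have hn : ‖(1/2 : ℝ)‖ = 1/2 := by norm_num
    rw [hn]
    calc (1/2 : ℝ) * ‖f' (1/2 + σ/2)‖ ≤ (1/2) * (L * (σ/2) + c) := by
          nlinarith [norm_nonneg (f' (1/2 + σ/2))]
      _ = (L/4) * σ + c/2 := by ring
  have hlb : ∀ σ ∈ Icc (0:ℝ) 1, ‖(-(1/2) : ℝ) • f' (1/2 - σ/2)‖ ≤ (L/4) * σ + c/2 := by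
    intro σ hσ
    rw [norm_smul]
    have hb' := hb _ (hmem' σ hσ)
    have habs : |(1/2 - σ/2) - 1/2| = σ/2 := by
      rw [show (1/2 - σ/2) - 1/2 = -(σ/2) by ring, abs_neg, abs_of_nonneg (by linarith [hσ.1])]
    rw [habs] at hb'
    have hn : ‖(-(1/2) : ℝ)‖ = 1/2 := by norm_num
    rw [hn]
    calc (1/2 : ℝ) * ‖f' (1/2 - σ/2)‖ ≤ (1/2) * (L * (σ/2) + c) := by
          nlinarith [norm_nonneg (f' (1/2 - σ/2))]
      _ = (L/4) * σ + c/2 := by ring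
  have k1 : ‖f (1/2 + 1/2) - f (1/2 + 0/2)‖ ≤ (L/4)/2 + c/2 := by
    have := aux_L0 (f := fun σ : ℝ => f (1/2 + σ/2)) hr hrb
    simpa using this
  have k2 : ‖f (1/2 - 1/2) - f (1/2 - 0/2)‖ ≤ (L/4)/2 + c/2 := by
    have := aux_L0 (f := fun σ : ℝ => f (1/2 - σ/2)) hl hlb
    simpa using this
  have e1 : (1/2 + 1/2 : ℝ) = 1 := by norm_num
  have e2 : (1/2 + 0/2 : ℝ) = 1/2 := by norm_num
  have e3 : (1/2 - 1/2 : ℝ) = 0 := by norm_num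
  have e4 : (1/2 - 0/2 : ℝ) = 1/2 := by norm_num
  rw [e1, e2] at k1
  rw [e3, e4] at k2
  calc ‖f 1 - f 0‖ = ‖(f 1 - f (1/2)) - (f 0 - f (1/2))‖ := by abel_nf
    _ ≤ ‖f 1 - f (1/2)‖ + ‖f 0 - f (1/2)‖ := norm_sub_le _ _
    _ ≤ ((L/4)/2 + c/2) + ((L/4)/2 + c/2) := add_le_add k1 k2
    _ = L/4 + c := by ring

/-- Lipschitz bound for a `C¹` map on a product of closed balls. -/
lemma aux_lip_pair {F : V × V → V} (hF : ContDiff ℝ 1 F) {C r1 r2 : ℝ}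
    (hC : ∀ p : V × V, ‖p.1‖ ≤ r1 → ‖p.2‖ ≤ r2 → ‖fderiv ℝ F p‖ ≤ C)
    {p q : V × V} (hp1 : ‖p.1‖ ≤ r1) (hp2 : ‖p.2‖ ≤ r2) (hq1 : ‖q.1‖ ≤ r1) (hq2 : ‖q.2‖ ≤ r2) :
    ‖F q - F p‖ ≤ C * ‖q - p‖ := by
  have hs : Convex ℝ ((Metric.closedBall (0:V) r1) ×ˢ (Metric.closedBall (0:V) r2)) :=
    (convex_closedBall _ _).prod (convex_closedBall _ _)
  refine hs.norm_image_sub_le_of_norm_fderiv_le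
    (fun x _ => (hF.differentiable one_ne_zero).differentiableAt)
    (fun x hx => hC x (by simpa [Metric.mem_closedBall, dist_eq_norm] using hx.1)
      (by simpa [Metric.mem_closedBall, dist_eq_norm] using hx.2)) ?_ ?_
  · exact ⟨by simpa [Metric.mem_closedBall, dist_eq_norm] using hp1,
      by simpa [Metric.mem_closedBall, dist_eq_norm] using hp2⟩
  · exact ⟨by simpa [Metric.mem_closedBall, dist_eq_norm] using hq1,
      by simpa [Metric.mem_closedBall, dist_eq_norm] using hq2⟩

/-- Lipschitz bound in the second variable only. -/
lemma aux_lip_y {F : V × V → V} (hF : ContDiff ℝ 1 F) {C r1 r2 : ℝ}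
    (hC : ∀ p : V × V, ‖p.1‖ ≤ r1 → ‖p.2‖ ≤ r2 → ‖fderiv ℝ F p‖ ≤ C)
    {x y z : V} (hx : ‖x‖ ≤ r1) (hy : ‖y‖ ≤ r2) (hz : ‖z‖ ≤ r2) :
    ‖F (x, z) - F (x, y)‖ ≤ C * ‖z - y‖ := by
  have h := aux_lip_pair hF hC (p := (x,y)) (q := (x,z)) hx hy hx hz
  have hnorm : ‖((x, z) : V × V) - (x, y)‖ = ‖z - y‖ := by
    simp [Prod.norm_def, Prod.sub_def]
  rwa [hnorm] at h

/-- Applied bound for the derivative from an `iteratedFDeriv` bound. -/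
lemma aux_fderiv_apply {f : V → V} {x v : V} {C : ℝ}
    (h : ‖iteratedFDeriv ℝ 1 f x‖ ≤ C) : ‖fderiv ℝ f x v‖ ≤ C * ‖v‖ := by
  have e : fderiv ℝ f x v = iteratedFDeriv ℝ 1 f x ![v] := by
    rw [iteratedFDeriv_one_apply]; simp
  rw [e]
  calc ‖iteratedFDeriv ℝ 1 f x ![v]‖ ≤ ‖iteratedFDeriv ℝ 1 f x‖ * ‖v‖ := by
        simpa using (iteratedFDeriv ℝ 1 f x).le_opNorm ![v]
    _ ≤ C * ‖v‖ := by gcongr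

lemma aux_pair {M : Type*} [AddCommMonoid M] (f : ℕ → M) (n : ℕ) :
    ∑ j ∈ Finset.range (2 * n), f j = ∑ i ∈ Finset.range n, (f (2 * i) + f (2 * i + 1)) := by
  induction n with
  | zero => simp
  | succ n ih =>
    rw [Finset.sum_range_succ, ← ih, Nat.mul_succ, Finset.sum_range_succ, Finset.sum_range_succ,
      add_assoc]

lemma aux_pow_lb : (5/4 : ℝ) ≤ (2:ℝ) ^ ((1:ℝ)/3) := by
  have h := Real.rpow_le_rpow (show (0:ℝ) ≤ (5/4)^(3:ℕ) by norm_num)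
    (show ((5/4:ℝ))^(3:ℕ) ≤ 2 by norm_num) (show (0:ℝ) ≤ 1/3 by norm_num)
  calc (5/4 : ℝ) = (((5/4:ℝ))^(3:ℕ)) ^ ((1:ℝ)/3) := by
        rw [← Real.rpow_natCast (5/4:ℝ) 3, ← Real.rpow_mul (by norm_num)]
        norm_num
    _ ≤ (2:ℝ) ^ ((1:ℝ)/3) := h

lemma aux_rpow_dyadic {h α : ℝ} (hh : 0 ≤ h) (m : ℕ) :
    (h / 2 ^ m) ^ (3*α) = h ^ (3*α) * ((2:ℝ) ^ (1-3*α)) ^ m / 2 ^ m := by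
  have h2 : ((2:ℝ) ^ m : ℝ) = (2:ℝ) ^ (m:ℝ) := (Real.rpow_natCast 2 m).symm
  have hr : ((2:ℝ) ^ (1-3*α)) ^ m = (2:ℝ) ^ ((1-3*α) * m) := by
    rw [← Real.rpow_natCast ((2:ℝ)^(1-3*α)) m, ← Real.rpow_mul (by norm_num)]
  rw [Real.div_rpow hh (by positivity), hr, h2]
  rw [← Real.rpow_mul (by norm_num)]
  rw [div_eq_div_iff (by positivity) (by positivity)]
  rw [mul_assoc, ← Real.rpow_add (by norm_num)]
  ring_nf

set_option maxHeartbeats 2000000 in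
theorem stmt_7
    (T α : ℝ) (hT : 0 < T) (hα1 : 1 / 3 < α) (hα2 : α ≤ 1 / 2)
    (β : ℕ → ℝ) (hβ : ∀ k ≤ 2, 0 ≤ β k)
    (W : ℝ → V → V) (WW : ℝ → ℝ → V × V → V) (NW NWW : ℝ)
    (hNW : 0 ≤ NW) (hNWW : 0 ≤ NWW)
    (hrp : RoughPath2 T α β W WW NW NWW)
    (Y Yd : ℝ → V) (MY MYd CY CYd CR : ℝ)
    (hMY : ∀ t ∈ Icc (0 : ℝ) T, ‖Y t‖ ≤ MY)
    (hMYd : ∀ t ∈ Icc (0 : ℝ) T, ‖Yd t‖ ≤ MYd)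
    (hCY : ∀ s ∈ Icc (0 : ℝ) T, ∀ t ∈ Icc (0 : ℝ) T, ‖Y t - Y s‖ ≤ CY * |t - s| ^ α)
    (hCYd : ∀ s ∈ Icc (0 : ℝ) T, ∀ t ∈ Icc (0 : ℝ) T, ‖Yd t - Yd s‖ ≤ CYd * |t - s| ^ α)
    (hCR : ∀ s ∈ Icc (0 : ℝ) T, ∀ t ∈ Icc (0 : ℝ) T,
      ‖Y t - Y s - (W t (Yd s) - W s (Yd s))‖ ≤ CR * |t - s| ^ (2 * α))
    (Z : ℝ → V)
    (hZ : ∀ t ∈ Icc (0 : ℝ) T, ∀ ε > (0 : ℝ), ∃ δ > (0 : ℝ), ∀ P : TimePartition 0 t,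
      (∀ k < P.n, P.pts (k + 1) - P.pts k < δ) → ‖riemannSum W WW Y Yd P - Z t‖ ≤ ε) :
    (∃ CZ : ℝ, ∀ s ∈ Icc (0 : ℝ) T, ∀ t ∈ Icc (0 : ℝ) T, ‖Z t - Z s‖ ≤ CZ * |t - s| ^ α) ∧
    (∀ s ∈ Icc (0 : ℝ) T, ∀ t ∈ Icc (0 : ℝ) T, s ≤ t →
      ‖Z t - Z s - (W t (Y s) - W s (Y s))‖
        ≤ (1 - (2 : ℝ) ^ (1 - 3 * α))⁻¹ * (NW + NWW) * (1 + 2 * MYd) ^ (max (β 0) (β 1))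
            * (1 + 2 * MY) ^ (max (β 1) (β 2)) * (1 + T ^ α * (CY + CYd + CR))
            * |t - s| ^ (2 * α)) := by
  -- basic facts
  have hα0 : 0 < α := by linarith
  have h0T : (0:ℝ) ∈ Icc (0:ℝ) T := ⟨le_refl _, hT.le⟩
  have hMY0 : 0 ≤ MY := le_trans (norm_nonneg _) (hMY 0 h0T)
  have hMYd0 : 0 ≤ MYd := le_trans (norm_nonneg _) (hMYd 0 h0T)
  have hTmem : T ∈ Icc (0:ℝ) T := ⟨hT.le, le_refl _⟩
  have hTpow : (0:ℝ) < T ^ α := Real.rpow_pos_of_pos hT α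
  have hCY0 : 0 ≤ CY := by
    have := hCY 0 h0T T hTmem
    have h1 : (0:ℝ) ≤ CY * |T - 0| ^ α := le_trans (norm_nonneg _) this
    by_contra hc
    push_neg at hc
    have : CY * |T - 0| ^ α < 0 := by
      apply mul_neg_of_neg_of_pos hc
      rw [show |T - 0| = T by rw [sub_zero, abs_of_pos hT]]
      exact hTpow
    linarith
  have hCYd0 : 0 ≤ CYd := by
    have := hCYd 0 h0T T hTmem
    have h1 : (0:ℝ) ≤ CYd * |T - 0| ^ α := le_trans (norm_nonneg _) this
    by_contra hc
    push_neg at hc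
    have : CYd * |T - 0| ^ α < 0 := by
      apply mul_neg_of_neg_of_pos hc
      rw [show |T - 0| = T by rw [sub_zero, abs_of_pos hT]]
      exact hTpow
    linarith
  have hCR0 : 0 ≤ CR := by
    have := hCR 0 h0T T hTmem
    have h1 : (0:ℝ) ≤ CR * |T - 0| ^ (2*α) := le_trans (norm_nonneg _) this
    by_contra hc
    push_neg at hc
    have : CR * |T - 0| ^ (2*α) < 0 := by
      apply mul_neg_of_neg_of_pos hc
      rw [show |T - 0| = T by rw [sub_zero, abs_of_pos hT]]
      exact Real.rpow_pos_of_pos hT _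
    linarith
  -- the constants
  set b01 : ℝ := max (β 0) (β 1) with hb01def
  set b12 : ℝ := max (β 1) (β 2) with hb12def
  have hb01 : 0 ≤ b01 := le_trans (hβ 0 (by norm_num)) (le_max_left _ _)
  have hb12 : 0 ≤ b12 := le_trans (hβ 1 (by norm_num)) (le_max_left _ _)
  set K : ℝ := (1 + MYd) ^ b01 * (1 + MY) ^ b12 with hKdef
  have hK1 : 1 ≤ K := by
    have h1 : (1:ℝ) ≤ (1 + MYd) ^ b01 := Real.one_le_rpow (by linarith) hb01
    have h2 : (1:ℝ) ≤ (1 + MY) ^ b12 := Real.one_le_rpow (by linarith) hb12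
    have := mul_le_mul h1 h2 zero_le_one (le_trans zero_le_one h1)
    simpa using this
  have hK0 : 0 ≤ K := by linarith
  set q : ℝ := (2:ℝ) ^ (1 - 3*α) with hqdef
  have hq0 : 0 < q := Real.rpow_pos_of_pos (by norm_num) _
  have hq1 : q < 1 := Real.rpow_lt_one_of_one_lt_of_neg one_lt_two (by linarith)
  set kα : ℝ := (1 - q)⁻¹ with hkαdef
  have hkα1 : 1 ≤ kα := by
    rw [hkαdef]
    rw [le_inv_comm₀ (by norm_num) (by linarith)]
    · linarith
  have hkα0 : 0 < kα := by linarith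
  set Cδ : ℝ := K * (NW + NWW) * (CY + CYd + CR) with hCδdef
  have hCδ0 : 0 ≤ Cδ := by positivity
  -- the corrected germ
  set Ξ : ℝ → ℝ → V := fun a b =>
    (W b (Y a) - W a (Y a)) + WW a b (Yd a, (2⁻¹:ℝ) • (Y a + Y ((a+b)/2))) with hΞdef
  -- lipschitz bound for WW maps
  have WWlip : ∀ a ∈ Icc (0:ℝ) T, ∀ b ∈ Icc (0:ℝ) T, ∀ p : V × V,
      ‖p.1‖ ≤ MYd → ‖p.2‖ ≤ MY → ‖fderiv ℝ (WW a b) p‖ ≤ NWW * |b-a| ^ (2*α) * K := by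
    intro a ha b hb p hp1 hp2
    have h := hrp.2.2.2.2.1 a ha b hb p.1 p.2
    calc ‖fderiv ℝ (WW a b) p‖
        = ‖fderiv ℝ (WW a b) (p.1, p.2)‖ := by rfl
      _ ≤ NWW * |b - a| ^ (2*α) * (1 + ‖p.1‖) ^ b01 * (1 + ‖p.2‖) ^ b12 := h
      _ ≤ NWW * |b - a| ^ (2*α) * (1 + MYd) ^ b01 * (1 + MY) ^ b12 := by
          have e1 : (1 + ‖p.1‖) ^ b01 ≤ (1 + MYd) ^ b01 :=
            Real.rpow_le_rpow (by positivity) (by linarith) hb01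
          have e2 : (1 + ‖p.2‖) ^ b12 ≤ (1 + MY) ^ b12 :=
            Real.rpow_le_rpow (by positivity) (by linarith) hb12
          gcongr
      _ = NWW * |b-a| ^ (2*α) * K := by rw [hKdef]; ring
  -- norms of midpoints
  have hmid_norm : ∀ u v : V, ‖u‖ ≤ MY → ‖v‖ ≤ MY → ‖(2⁻¹:ℝ) • (u + v)‖ ≤ MY := by
    intro u v hu hv
    rw [norm_smul]
    have h1 : ‖u + v‖ ≤ ‖u‖ + ‖v‖ := norm_add_le _ _
    have hn : ‖(2⁻¹:ℝ)‖ = 2⁻¹ := by norm_num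
    rw [hn]
    linarith only [h1, hu, hv]
  -- rpow helper : (c*h)^α ≤ c^α * h^α etc. ; and splitting of powers
  have rpow_split : ∀ h : ℝ, 0 ≤ h → h ^ (2*α) * h ^ α = h ^ (3*α) := by
    intro h hh
    rw [← Real.rpow_add' hh (by intro hcon; nlinarith)]
    ring_nf
  have rpow_half_le : ∀ h : ℝ, 0 ≤ h → (h/2) ^ α ≤ h ^ α := by
    intro h hh
    exact Real.rpow_le_rpow (by linarith) (by linarith) hα0.le
  -- defect bound
  have hX : (5/4 : ℝ) ≤ (2:ℝ) ^ α := by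
    have h13 : (2:ℝ)^((1:ℝ)/3) ≤ (2:ℝ)^α :=
      Real.rpow_le_rpow_of_exponent_le one_le_two (by linarith)
    linarith [aux_pow_lb]
  have half_pow : ∀ x : ℝ, 0 ≤ x → (x/2) ^ α ≤ (4/5) * x ^ α := by
    intro x hx
    rw [Real.div_rpow hx (by norm_num)]
    rw [div_le_iff₀ (by positivity : (0:ℝ) < (2:ℝ)^α)]
    nlinarith only [mul_nonneg (show (0:ℝ) ≤ (2:ℝ)^α - 5/4 by linarith only [hX])
      (Real.rpow_nonneg hx α)]
  have hβ1 : 0 ≤ β 1 := hβ 1 (by norm_num)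
  have rpow_twoα : ∀ x : ℝ, 0 ≤ x → x ^ (2*α) = x ^ α * x ^ α := by
    intro x hx
    rw [← Real.rpow_add' hx (by intro hcon; nlinarith)]
    ring_nf
  have hMYK : (1 + MY) ^ (β 1) ≤ K := by
    have h2 : (1 + MY) ^ (β 1) ≤ (1 + MY) ^ b12 :=
      Real.rpow_le_rpow_of_exponent_le (by linarith) (le_max_left _ _)
    have h3 : (1:ℝ) ≤ (1 + MYd) ^ b01 := Real.one_le_rpow (by linarith) hb01
    have h4 : (0:ℝ) ≤ (1 + MY) ^ b12 := by positivity
    rw [hKdef]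
    linarith only [h2, le_mul_of_one_le_left h4 h3]
  have defect : ∀ a ∈ Icc (0:ℝ) T, ∀ b ∈ Icc (0:ℝ) T, a ≤ b →
      ‖Ξ a b - Ξ a ((a+b)/2) - Ξ ((a+b)/2) b‖ ≤ Cδ * (b-a) ^ (3*α) := by
    intro a ha b hb hab
    set u : ℝ := (a+b)/2 with hudef
    have hu : u ∈ Icc (0:ℝ) T := ⟨by rw [hudef]; linarith [ha.1, hb.1], by rw [hudef]; linarith [ha.2, hb.2]⟩
    have hau : a ≤ u := by rw [hudef]; linarith
    have hub : u ≤ b := by rw [hudef]; linarith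
    have hm1 : (a+u)/2 ∈ Icc (0:ℝ) T := ⟨by linarith [ha.1, hu.1], by linarith [ha.2, hu.2]⟩
    have hm2 : (u+b)/2 ∈ Icc (0:ℝ) T := ⟨by linarith [hu.1, hb.1], by linarith [hu.2, hb.2]⟩
    have hba : (0:ℝ) ≤ b - a := by linarith
    -- abbreviations
    set g : V := (2⁻¹:ℝ) • (Y a + Y u) with hgdef
    set gau : V := (2⁻¹:ℝ) • (Y a + Y ((a+u)/2)) with hgaudef
    set gub : V := (2⁻¹:ℝ) • (Y u + Y ((u+b)/2)) with hgubdef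
    set Δ : V := Y u - Y a with hΔdef
    set Ps : V := W u (Yd a) - W a (Yd a) with hPsdef
    set Rr : V := Y u - Y a - (W u (Yd a) - W a (Yd a)) with hRrdef
    -- Chen's relation
    have hchen := hrp.2.2.2.2.2 a ha u hu b hb (Yd a) g
    have hchen2 : WW a b (Yd a, g)
        = fderiv ℝ (fun z => W b z - W u z) g (W u (Yd a) - W a (Yd a))
          + WW a u (Yd a, g) + WW u b (Yd a, g) := by
      rw [← hchen]; abel
    -- algebraic decomposition of the defect
    have key : Ξ a b - Ξ a u - Ξ u b =
        (((W b (Y a) - W u (Y a)) - (W b (Y u) - W u (Y u)))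
            + fderiv ℝ (fun z => W b z - W u z) g Ps)
        + (WW a u (Yd a, g) - WW a u (Yd a, gau))
        + (WW u b (Yd a, g) - WW u b (Yd u, gub)) := by
      have e1 : Ξ a b = (W b (Y a) - W a (Y a)) + WW a b (Yd a, g) := by
        rw [hΞdef, hgdef, hudef]
      have e2 : Ξ a u = (W u (Y a) - W a (Y a)) + WW a u (Yd a, gau) := by
        rw [hΞdef, hgaudef]
      have e3 : Ξ u b = (W b (Y u) - W u (Y u)) + WW u b (Yd u, gub) := by
        rw [hΞdef, hgubdef]
      rw [e1, e2, e3, hchen2, hPsdef]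
      abel
    rw [key]
    -- norms of the basic quantities
    have hnΔ : ‖Δ‖ ≤ CY * ((b-a)/2) ^ α := by
      have h1 := hCY a ha u hu
      have habs : |u - a| = (b-a)/2 := by rw [hudef, abs_of_nonneg (by linarith)]; ring_nf
      rw [habs] at h1
      exact h1
    have hnR : ‖Rr‖ ≤ CR * (((b-a)/2) ^ α * ((b-a)/2) ^ α) := by
      have h1 := hCR a ha u hu
      have habs : |u - a| = (b-a)/2 := by rw [hudef, abs_of_nonneg (by linarith)]; ring_nf
      rw [habs] at h1
      rw [← rpow_twoα _ (by linarith : (0:ℝ) ≤ (b-a)/2)]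
      exact h1
    have hgnorm : ‖g‖ ≤ MY := by
      rw [hgdef]; exact hmid_norm _ _ (hMY a ha) (hMY u hu)
    have hbu : b - u = (b-a)/2 := by rw [hudef]; ring
    have hua : u - a = (b-a)/2 := by rw [hudef]; ring
    -- differentiability of the increment map
    have hFdiff : Differentiable ℝ (fun z => W b z - W u z) :=
      ((hrp.1 b hb).differentiable (by norm_num)).sub ((hrp.1 u hu).differentiable (by norm_num))
    set L : ℝ := NWW * ((b-a)^(2*α) + 2*(((b-a)/2)^α * ((b-a)/2)^α)) * K * ‖Δ‖ with hLdef
    set cc : ℝ := NW * ((b-a)/2)^α * ((1+MY)^(β 1)) * ‖Rr‖ with hccdef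
    -- mean value estimate for the W-part (T1)
    have hd : ∀ θ ∈ Icc (0:ℝ) 1, HasDerivAt
        (fun θ : ℝ => (W b (Y a + θ • Δ) - W u (Y a + θ • Δ))
          - θ • (fderiv ℝ (fun z => W b z - W u z) g Ps))
        ((fderiv ℝ (fun z => W b z - W u z) (Y a + θ • Δ)) Δ
          - fderiv ℝ (fun z => W b z - W u z) g Ps) θ := by
      intro θ _
      have hline : HasDerivAt (fun θ : ℝ => Y a + θ • Δ) Δ θ := by
        simpa using ((hasDerivAt_id θ).smul_const Δ).const_add (Y a)
      have h1 : HasDerivAt (fun θ : ℝ => (fun z => W b z - W u z) (Y a + θ • Δ))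
          ((fderiv ℝ (fun z => W b z - W u z) (Y a + θ • Δ)) Δ) θ :=
        (hFdiff _).hasFDerivAt.comp_hasDerivAt θ hline
      have h2 : HasDerivAt (fun θ : ℝ => θ • (fderiv ℝ (fun z => W b z - W u z) g Ps))
          (fderiv ℝ (fun z => W b z - W u z) g Ps) θ := by
        simpa using (hasDerivAt_id θ).smul_const (fderiv ℝ (fun z => W b z - W u z) g Ps)
      exact h1.sub h2
    have hbd : ∀ θ ∈ Icc (0:ℝ) 1,
        ‖(fderiv ℝ (fun z => W b z - W u z) (Y a + θ • Δ)) Δ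
          - fderiv ℝ (fun z => W b z - W u z) g Ps‖ ≤ L * |θ - 1/2| + cc := by
      intro θ hθ
      have hcθ : ‖Y a + θ • Δ‖ ≤ MY := by
        have e : Y a + θ • Δ = (1-θ) • Y a + θ • Y u := by rw [hΔdef]; module
        rw [e]
        calc ‖(1-θ) • Y a + θ • Y u‖ ≤ ‖(1-θ) • Y a‖ + ‖θ • Y u‖ := norm_add_le _ _
          _ = |1-θ| * ‖Y a‖ + |θ| * ‖Y u‖ := by rw [norm_smul, norm_smul, Real.norm_eq_abs, Real.norm_eq_abs]
          _ = (1-θ) * ‖Y a‖ + θ * ‖Y u‖ := by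
              rw [abs_of_nonneg (by linarith [hθ.2]), abs_of_nonneg hθ.1]
          _ ≤ MY := by
              have k1 := mul_le_mul_of_nonneg_left (hMY a ha)
                (show (0:ℝ) ≤ 1-θ by linarith only [hθ.2])
              have k2 := mul_le_mul_of_nonneg_left (hMY u hu) hθ.1
              linarith only [k1, k2]
      have esplit : (fderiv ℝ (fun z => W b z - W u z) (Y a + θ • Δ)) Δ
          - fderiv ℝ (fun z => W b z - W u z) g Ps
          = ((fderiv ℝ (fun z => W b z - W u z) (Y a + θ • Δ)) Ps
              - (fderiv ℝ (fun z => W b z - W u z) g) Ps)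
            + (fderiv ℝ (fun z => W b z - W u z) (Y a + θ • Δ)) Rr := by
        have hΔPR : Δ = Ps + Rr := by rw [hΔdef, hPsdef, hRrdef]; abel
        rw [hΔPR, map_add]; abel
      rw [esplit]
      have bound2 : ‖(fderiv ℝ (fun z => W b z - W u z) (Y a + θ • Δ)) Rr‖ ≤ cc := by
        have hit := hrp.2.1 1 (by norm_num) u hu b hb (Y a + θ • Δ)
        have hit2 : ‖iteratedFDeriv ℝ 1 (fun z => W b z - W u z) (Y a + θ • Δ)‖
            ≤ NW * ((b-a)/2)^α * (1+MY)^(β 1) := by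
          rw [show |b - u| = (b-a)/2 by rw [abs_of_nonneg (by linarith), hbu]] at hit
          calc ‖iteratedFDeriv ℝ 1 (fun z => W b z - W u z) (Y a + θ • Δ)‖
              ≤ NW * ((b-a)/2)^α * (1 + ‖Y a + θ • Δ‖)^(β 1) := hit
            _ ≤ NW * ((b-a)/2)^α * (1+MY)^(β 1) := by
                have hr := Real.rpow_le_rpow (by positivity : (0:ℝ) ≤ 1 + ‖Y a + θ • Δ‖)
                  (by linarith only [hcθ] : 1 + ‖Y a + θ • Δ‖ ≤ 1 + MY) hβ1
                have h0 : (0:ℝ) ≤ NW * ((b-a)/2)^α := by positivity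
                exact mul_le_mul_of_nonneg_left hr h0
        rw [hccdef]
        exact aux_fderiv_apply hit2
      have bound1 : ‖(fderiv ℝ (fun z => W b z - W u z) (Y a + θ • Δ)) Ps
          - (fderiv ℝ (fun z => W b z - W u z) g) Ps‖ ≤ L * |θ - 1/2| := by
        have hφ : ∀ z : V, (fderiv ℝ (fun w => W b w - W u w) z) Ps
            = WW a b (Yd a, z) - WW a u (Yd a, z) - WW u b (Yd a, z) := by
          intro z
          rw [hPsdef]
          exact (hrp.2.2.2.2.2 a ha u hu b hb (Yd a) z).symm
        rw [hφ, hφ]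
        have hdist : ‖(Y a + θ • Δ) - g‖ = |θ - 1/2| * ‖Δ‖ := by
          have e : (Y a + θ • Δ) - g = (θ - 1/2) • Δ := by rw [hgdef, hΔdef]; module
          rw [e, norm_smul, Real.norm_eq_abs]
        have l1 : ‖WW a b (Yd a, Y a + θ • Δ) - WW a b (Yd a, g)‖
            ≤ NWW * (b-a)^(2*α) * K * (|θ - 1/2| * ‖Δ‖) := by
          have := aux_lip_y (hrp.2.2.1 a ha b hb) (WWlip a ha b hb)
            (hMYd a ha) hgnorm hcθ
          rw [hdist] at this
          rw [show |b - a| = b - a from abs_of_nonneg hba] at this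
          exact this
        have l2 : ‖WW a u (Yd a, Y a + θ • Δ) - WW a u (Yd a, g)‖
            ≤ NWW * (((b-a)/2)^α * ((b-a)/2)^α) * K * (|θ - 1/2| * ‖Δ‖) := by
          have := aux_lip_y (hrp.2.2.1 a ha u hu) (WWlip a ha u hu)
            (hMYd a ha) hgnorm hcθ
          rw [hdist] at this
          rw [show |u - a| = (b-a)/2 by rw [abs_of_nonneg (by linarith), hua],
            rpow_twoα _ (by linarith : (0:ℝ) ≤ (b-a)/2)] at this
          exact this
        have l3 : ‖WW u b (Yd a, Y a + θ • Δ) - WW u b (Yd a, g)‖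
            ≤ NWW * (((b-a)/2)^α * ((b-a)/2)^α) * K * (|θ - 1/2| * ‖Δ‖) := by
          have := aux_lip_y (hrp.2.2.1 u hu b hb) (WWlip u hu b hb)
            (hMYd a ha) hgnorm hcθ
          rw [hdist] at this
          rw [show |b - u| = (b-a)/2 by rw [abs_of_nonneg (by linarith), hbu],
            rpow_twoα _ (by linarith : (0:ℝ) ≤ (b-a)/2)] at this
          exact this
        calc ‖(WW a b (Yd a, Y a + θ • Δ) - WW a u (Yd a, Y a + θ • Δ) - WW u b (Yd a, Y a + θ • Δ))
              - (WW a b (Yd a, g) - WW a u (Yd a, g) - WW u b (Yd a, g))‖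
            = ‖(WW a b (Yd a, Y a + θ • Δ) - WW a b (Yd a, g))
                - (WW a u (Yd a, Y a + θ • Δ) - WW a u (Yd a, g))
                - (WW u b (Yd a, Y a + θ • Δ) - WW u b (Yd a, g))‖ := by
              congr 1; abel
          _ ≤ ‖(WW a b (Yd a, Y a + θ • Δ) - WW a b (Yd a, g))
                - (WW a u (Yd a, Y a + θ • Δ) - WW a u (Yd a, g))‖
              + ‖WW u b (Yd a, Y a + θ • Δ) - WW u b (Yd a, g)‖ := norm_sub_le _ _
          _ ≤ ‖WW a b (Yd a, Y a + θ • Δ) - WW a b (Yd a, g)‖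
              + ‖WW a u (Yd a, Y a + θ • Δ) - WW a u (Yd a, g)‖
              + ‖WW u b (Yd a, Y a + θ • Δ) - WW u b (Yd a, g)‖ := by
              have := norm_sub_le (WW a b (Yd a, Y a + θ • Δ) - WW a b (Yd a, g))
                (WW a u (Yd a, Y a + θ • Δ) - WW a u (Yd a, g))
              linarith only [this]
          _ ≤ NWW * (b-a)^(2*α) * K * (|θ - 1/2| * ‖Δ‖)
              + NWW * (((b-a)/2)^α * ((b-a)/2)^α) * K * (|θ - 1/2| * ‖Δ‖)
              + NWW * (((b-a)/2)^α * ((b-a)/2)^α) * K * (|θ - 1/2| * ‖Δ‖) := by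
              linarith only [l1, l2, l3]
          _ = L * |θ - 1/2| := by rw [hLdef]; ring
      calc ‖((fderiv ℝ (fun z => W b z - W u z) (Y a + θ • Δ)) Ps
              - (fderiv ℝ (fun z => W b z - W u z) g) Ps)
            + (fderiv ℝ (fun z => W b z - W u z) (Y a + θ • Δ)) Rr‖
          ≤ ‖(fderiv ℝ (fun z => W b z - W u z) (Y a + θ • Δ)) Ps
              - (fderiv ℝ (fun z => W b z - W u z) g) Ps‖
            + ‖(fderiv ℝ (fun z => W b z - W u z) (Y a + θ • Δ)) Rr‖ := norm_add_le _ _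
        _ ≤ L * |θ - 1/2| + cc := add_le_add bound1 bound2
    have hT1mv := aux_L1 hd hbd
    have hT1 : ‖((W b (Y a) - W u (Y a)) - (W b (Y u) - W u (Y u)))
        + fderiv ℝ (fun z => W b z - W u z) g Ps‖ ≤ L/4 + cc := by
      have hf1 : Y a + (1:ℝ) • Δ = Y u := by rw [hΔdef]; module
      have hf0 : Y a + (0:ℝ) • Δ = Y a := by rw [hΔdef]; module
      have e : ((W b (Y a) - W u (Y a)) - (W b (Y u) - W u (Y u)))
          + fderiv ℝ (fun z => W b z - W u z) g Ps
          = -(((W b (Y a + (1:ℝ) • Δ) - W u (Y a + (1:ℝ) • Δ))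
                - (1:ℝ) • (fderiv ℝ (fun z => W b z - W u z) g Ps))
              - ((W b (Y a + (0:ℝ) • Δ) - W u (Y a + (0:ℝ) • Δ))
                - (0:ℝ) • (fderiv ℝ (fun z => W b z - W u z) g Ps))) := by
        rw [hf1, hf0, one_smul, zero_smul]
        abel
      rw [e, norm_neg]
      exact hT1mv
    -- T2 bound
    have hT2 : ‖WW a u (Yd a, g) - WW a u (Yd a, gau)‖
        ≤ NWW * (((b-a)/2)^α * ((b-a)/2)^α) * K * (2⁻¹ * (CY * ((b-a)/4)^α)) := by
      have hgaunorm : ‖gau‖ ≤ MY := by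
        rw [hgaudef]; exact hmid_norm _ _ (hMY a ha) (hMY _ hm1)
      have hlip := aux_lip_y (hrp.2.2.1 a ha u hu) (WWlip a ha u hu)
        (hMYd a ha) hgaunorm hgnorm
      have hdist : ‖g - gau‖ ≤ 2⁻¹ * (CY * ((b-a)/4)^α) := by
        have e : g - gau = (2⁻¹:ℝ) • (Y u - Y ((a+u)/2)) := by
          rw [hgdef, hgaudef]; module
        rw [e, norm_smul]
        have h2 := hCY ((a+u)/2) hm1 u hu
        have habs : |u - (a+u)/2| = (b-a)/4 := by
          rw [abs_of_nonneg (by linarith), hudef]; ring_nf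
        rw [habs] at h2
        have hn : ‖(2⁻¹:ℝ)‖ = 2⁻¹ := by norm_num
        rw [hn]
        linarith only [h2]
      calc ‖WW a u (Yd a, g) - WW a u (Yd a, gau)‖
          ≤ NWW * |u - a|^(2*α) * K * ‖g - gau‖ := hlip
        _ ≤ NWW * (((b-a)/2)^α * ((b-a)/2)^α) * K * (2⁻¹ * (CY * ((b-a)/4)^α)) := by
            rw [show |u - a| = (b-a)/2 by rw [abs_of_nonneg (by linarith), hua],
              rpow_twoα _ (by linarith : (0:ℝ) ≤ (b-a)/2)]
            exact mul_le_mul_of_nonneg_left hdist (by positivity)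
    -- T3 bound
    have hT3 : ‖WW u b (Yd a, g) - WW u b (Yd u, gub)‖
        ≤ NWW * (((b-a)/2)^α * ((b-a)/2)^α) * K
            * (CYd * ((b-a)/2)^α + 2⁻¹ * (CY * (b-a)^α)) := by
      have hgubnorm : ‖gub‖ ≤ MY := by
        rw [hgubdef]; exact hmid_norm _ _ (hMY u hu) (hMY _ hm2)
      have hlip := aux_lip_pair (hrp.2.2.1 u hu b hb) (WWlip u hu b hb)
        (p := (Yd u, gub)) (q := (Yd a, g)) (hMYd u hu) hgubnorm (hMYd a ha) hgnorm
      have hdist : ‖((Yd a, g) : V × V) - (Yd u, gub)‖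
          ≤ CYd * ((b-a)/2)^α + 2⁻¹ * (CY * (b-a)^α) := by
        have e1 : ‖Yd a - Yd u‖ ≤ CYd * ((b-a)/2)^α := by
          have h2 := hCYd u hu a ha
          rw [show |a - u| = (b-a)/2 by rw [abs_of_nonpos (by linarith), hudef]; ring_nf] at h2
          exact h2
        have e2 : ‖g - gub‖ ≤ 2⁻¹ * (CY * (b-a)^α) := by
          have e : g - gub = (2⁻¹:ℝ) • (Y a - Y ((u+b)/2)) := by
            rw [hgdef, hgubdef]; module
          rw [e, norm_smul]
          have h2 := hCY ((u+b)/2) hm2 a ha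
          have hle : |a - (u+b)/2| ≤ b - a := by
            rw [abs_of_nonpos (by linarith [hau, hub])]
            rw [hudef]; linarith [hab]
          have h3 : ‖Y a - Y ((u+b)/2)‖ ≤ CY * (b-a)^α := by
            calc ‖Y a - Y ((u+b)/2)‖ ≤ CY * |a - (u+b)/2|^α := h2
              _ ≤ CY * (b-a)^α := by
                  have hr := Real.rpow_le_rpow (abs_nonneg _) hle hα0.le
                  exact mul_le_mul_of_nonneg_left hr hCY0
          have hn : ‖(2⁻¹:ℝ)‖ = 2⁻¹ := by norm_num
          rw [hn]
          linarith only [h3]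
        calc ‖((Yd a, g) : V × V) - (Yd u, gub)‖
            = max ‖Yd a - Yd u‖ ‖g - gub‖ := by rw [Prod.sub_def]; rfl
          _ ≤ ‖Yd a - Yd u‖ + ‖g - gub‖ :=
              max_le (le_add_of_nonneg_right (norm_nonneg _)) (le_add_of_nonneg_left (norm_nonneg _))
          _ ≤ CYd * ((b-a)/2)^α + 2⁻¹ * (CY * (b-a)^α) := add_le_add e1 e2
      calc ‖WW u b (Yd a, g) - WW u b (Yd u, gub)‖
          ≤ NWW * |b - u|^(2*α) * K * ‖((Yd a, g) : V × V) - (Yd u, gub)‖ := hlip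
        _ ≤ NWW * (((b-a)/2)^α * ((b-a)/2)^α) * K
            * (CYd * ((b-a)/2)^α + 2⁻¹ * (CY * (b-a)^α)) := by
            rw [show |b - u| = (b-a)/2 by rw [abs_of_nonneg (by linarith), hbu],
              rpow_twoα _ (by linarith : (0:ℝ) ≤ (b-a)/2)]
            exact mul_le_mul_of_nonneg_left hdist (by positivity)
    -- numeric assembly
    set A : ℝ := (b-a)^α with hAdef
    set Ah : ℝ := ((b-a)/2)^α with hAhdef
    have hA0 : (0:ℝ) ≤ A := Real.rpow_nonneg hba _
    have hAh0 : (0:ℝ) ≤ Ah := Real.rpow_nonneg (by linarith) _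
    have hAh : Ah ≤ (4/5) * A := half_pow _ hba
    have hAh2 : Ah * Ah ≤ (16/25) * (A * A) := by
      have := mul_le_mul hAh hAh hAh0 (by positivity)
      linarith only [this]
    have hA4 : ((b-a)/4)^α ≤ (16/25) * A := by
      have h1 : ((b-a)/4 : ℝ) = ((b-a)/2)/2 := by ring
      rw [h1]
      calc (((b-a)/2)/2)^α ≤ (4/5) * Ah := half_pow _ (by linarith)
        _ ≤ (4/5) * ((4/5) * A) := by linarith only [hAh]
        _ = (16/25) * A := by ring
    have hA40 : (0:ℝ) ≤ ((b-a)/4)^α := Real.rpow_nonneg (by linarith) _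
    have hA2 : (b-a)^(2*α) = A * A := rpow_twoα _ hba
    have hA3 : (b-a)^(3*α) = (A * A) * A := by
      rw [← rpow_split _ hba, hA2]
    have hΔA : ‖Δ‖ ≤ (4/5) * (CY * A) := by
      calc ‖Δ‖ ≤ CY * Ah := hnΔ
        _ ≤ CY * ((4/5) * A) := mul_le_mul_of_nonneg_left hAh hCY0
        _ = (4/5) * (CY * A) := by ring
    have hRA : ‖Rr‖ ≤ (16/25) * (CR * (A * A)) := by
      calc ‖Rr‖ ≤ CR * (Ah * Ah) := hnR
        _ ≤ CR * ((16/25) * (A * A)) := mul_le_mul_of_nonneg_left hAh2 hCR0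
        _ = (16/25) * (CR * (A * A)) := by ring
    have hKA0 : (0:ℝ) ≤ NWW * K := mul_nonneg hNWW hK0
    have hb1 : L/4 + cc ≤ (57/125) * (NWW * K * CY * ((A*A)*A))
        + (64/125) * (NW * K * CR * ((A*A)*A)) := by
      have hLval : L = NWW * K * ((A*A + 2*(Ah*Ah)) * ‖Δ‖) := by
        rw [hLdef, hA2]; ring
      have hXb : A*A + 2*(Ah*Ah) ≤ (57/25) * (A*A) := by linarith only [hAh2]
      have hLb : L ≤ (228/125) * (NWW * K * CY * ((A*A)*A)) := by
        rw [hLval]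
        calc NWW * K * ((A*A + 2*(Ah*Ah)) * ‖Δ‖)
            ≤ NWW * K * (((57/25) * (A*A)) * ((4/5) * (CY * A))) := by
              apply mul_le_mul_of_nonneg_left _ hKA0
              exact mul_le_mul hXb hΔA (norm_nonneg _) (by positivity)
          _ = (228/125) * (NWW * K * CY * ((A*A)*A)) := by ring
      have hccb : cc ≤ (64/125) * (NW * K * CR * ((A*A)*A)) := by
        rw [hccdef]
        calc NW * Ah * (1+MY)^(β 1) * ‖Rr‖
            = NW * ((Ah * (1+MY)^(β 1)) * ‖Rr‖) := by ring
          _ ≤ NW * ((((4/5) * A) * K) * ((16/25) * (CR * (A * A)))) := by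
              apply mul_le_mul_of_nonneg_left _ hNW
              apply mul_le_mul _ hRA (norm_nonneg _) (by positivity)
              exact mul_le_mul hAh hMYK (by positivity) (by linarith only [hA0])
          _ = (64/125) * (NW * K * CR * ((A*A)*A)) := by ring
      linarith only [hLb, hccb]
    have hb2 : NWW * (Ah * Ah) * K * (2⁻¹ * (CY * ((b-a)/4)^α))
        ≤ (128/625) * (NWW * K * CY * ((A*A)*A)) := by
      calc NWW * (Ah * Ah) * K * (2⁻¹ * (CY * ((b-a)/4)^α))
          = NWW * K * ((Ah * Ah) * (2⁻¹ * (CY * ((b-a)/4)^α))) := by ring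
        _ ≤ NWW * K * (((16/25) * (A*A)) * (2⁻¹ * (CY * ((16/25) * A)))) := by
            apply mul_le_mul_of_nonneg_left _ hKA0
            apply mul_le_mul hAh2 _ (by positivity) (by positivity)
            have := mul_le_mul_of_nonneg_left hA4 hCY0
            linarith only [this]
        _ = (128/625) * (NWW * K * CY * ((A*A)*A)) := by ring
    have hb3 : NWW * (Ah * Ah) * K * (CYd * Ah + 2⁻¹ * (CY * A))
        ≤ (64/125) * (NWW * K * CYd * ((A*A)*A)) + (8/25) * (NWW * K * CY * ((A*A)*A)) := by
      calc NWW * (Ah * Ah) * K * (CYd * Ah + 2⁻¹ * (CY * A))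
          = NWW * K * ((Ah * Ah) * (CYd * Ah + 2⁻¹ * (CY * A))) := by ring
        _ ≤ NWW * K * (((16/25) * (A*A)) * (CYd * ((4/5) * A) + 2⁻¹ * (CY * A))) := by
            apply mul_le_mul_of_nonneg_left _ hKA0
            apply mul_le_mul hAh2 _ _ (by positivity)
            · have := mul_le_mul_of_nonneg_left hAh hCYd0
              linarith only [this]
            · positivity
        _ = (16/25) * (4/5) * (NWW * K * CYd * ((A*A)*A))
            + (16/25) * 2⁻¹ * (NWW * K * CY * ((A*A)*A)) := by ring
        _ ≤ (64/125) * (NWW * K * CYd * ((A*A)*A)) + (8/25) * (NWW * K * CY * ((A*A)*A)) := by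
            norm_num
    -- sum up
    have htri : ‖(((W b (Y a) - W u (Y a)) - (W b (Y u) - W u (Y u)))
            + fderiv ℝ (fun z => W b z - W u z) g Ps)
        + (WW a u (Yd a, g) - WW a u (Yd a, gau))
        + (WW u b (Yd a, g) - WW u b (Yd u, gub))‖
        ≤ (L/4 + cc)
          + NWW * (Ah * Ah) * K * (2⁻¹ * (CY * ((b-a)/4)^α))
          + NWW * (Ah * Ah) * K * (CYd * Ah + 2⁻¹ * (CY * A)) := by
      have n1 := norm_add_le ((((W b (Y a) - W u (Y a)) - (W b (Y u) - W u (Y u)))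
            + fderiv ℝ (fun z => W b z - W u z) g Ps)
        + (WW a u (Yd a, g) - WW a u (Yd a, gau)))
        (WW u b (Yd a, g) - WW u b (Yd u, gub))
      have n2 := norm_add_le ((((W b (Y a) - W u (Y a)) - (W b (Y u) - W u (Y u)))
            + fderiv ℝ (fun z => W b z - W u z) g Ps))
        (WW a u (Yd a, g) - WW a u (Yd a, gau))
      linarith only [n1, n2, hT1, hT2, hT3]
    have hcoeff : (57/125 + 128/625 + 8/25) * (NWW * CY) + (64/125) * (NWW * CYd)
        + (64/125) * (NW * CR) ≤ (NW + NWW) * (CY + CYd + CR) := by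
      nlinarith only [mul_nonneg hNW hCY0, mul_nonneg hNW hCYd0, mul_nonneg hNW hCR0,
        mul_nonneg hNWW hCY0, mul_nonneg hNWW hCYd0, mul_nonneg hNWW hCR0]
    have hfin : (L/4 + cc)
          + NWW * (Ah * Ah) * K * (2⁻¹ * (CY * ((b-a)/4)^α))
          + NWW * (Ah * Ah) * K * (CYd * Ah + 2⁻¹ * (CY * A))
        ≤ Cδ * (b-a)^(3*α) := by
      rw [hCδdef, hA3]
      have hAAA : (0:ℝ) ≤ (A*A)*A := by positivity
      have step : (57/125 + 128/625 + 8/25) * (NWW * K * CY * ((A*A)*A))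
          + (64/125) * (NWW * K * CYd * ((A*A)*A)) + (64/125) * (NW * K * CR * ((A*A)*A))
          ≤ K * (NW + NWW) * (CY + CYd + CR) * ((A*A)*A) := by
        have := mul_le_mul_of_nonneg_right hcoeff (mul_nonneg hK0 hAAA)
        calc (57/125 + 128/625 + 8/25) * (NWW * K * CY * ((A*A)*A))
            + (64/125) * (NWW * K * CYd * ((A*A)*A)) + (64/125) * (NW * K * CR * ((A*A)*A))
            = ((57/125 + 128/625 + 8/25) * (NWW * CY) + (64/125) * (NWW * CYd)
              + (64/125) * (NW * CR)) * (K * ((A*A)*A)) := by ring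
          _ ≤ ((NW + NWW) * (CY + CYd + CR)) * (K * ((A*A)*A)) := this
          _ = K * (NW + NWW) * (CY + CYd + CR) * ((A*A)*A) := by ring
      linarith only [hb1, hb2, hb3, step]
    linarith only [htri, hfin]
  -- difference between corrected germ and plain germ
  have germ_err : ∀ a ∈ Icc (0:ℝ) T, ∀ b ∈ Icc (0:ℝ) T, a ≤ b →
      ‖Ξ a b - ((W b (Y a) - W a (Y a)) + WW a b (Yd a, Y a))‖
        ≤ NWW * K * CY * (b-a) ^ (3*α) := by
    intro a ha b hb hab
    have hmidmem : (a+b)/2 ∈ Icc (0:ℝ) T := ⟨by linarith [ha.1, hb.1], by linarith [ha.2, hb.2]⟩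
    have hba : 0 ≤ b - a := by linarith
    have e0 : Ξ a b - ((W b (Y a) - W a (Y a)) + WW a b (Yd a, Y a))
        = WW a b (Yd a, (2⁻¹:ℝ) • (Y a + Y ((a+b)/2))) - WW a b (Yd a, Y a) := by
      rw [hΞdef]; beta_reduce; abel
    rw [e0]
    have hlip := aux_lip_y (hrp.2.2.1 a ha b hb) (WWlip a ha b hb)
      (hMYd a ha) (hMY a ha) (hmid_norm _ _ (hMY a ha) (hMY _ hmidmem))
    have hdist : ‖(2⁻¹:ℝ) • (Y a + Y ((a+b)/2)) - Y a‖ ≤ 2⁻¹ * (CY * ((b-a)/2) ^ α) := by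
      have e1 : (2⁻¹:ℝ) • (Y a + Y ((a+b)/2)) - Y a = (2⁻¹:ℝ) • (Y ((a+b)/2) - Y a) := by
        module
      rw [e1, norm_smul]
      have hn : ‖(2⁻¹:ℝ)‖ = 2⁻¹ := by norm_num
      rw [hn]
      have h2 := hCY a ha ((a+b)/2) hmidmem
      have habs : |(a+b)/2 - a| = (b-a)/2 := by
        rw [abs_of_nonneg (by linarith)]; ring
      rw [habs] at h2
      linarith only [h2]
    calc ‖WW a b (Yd a, (2⁻¹:ℝ) • (Y a + Y ((a+b)/2))) - WW a b (Yd a, Y a)‖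
        ≤ NWW * |b-a| ^ (2*α) * K * ‖(2⁻¹:ℝ) • (Y a + Y ((a+b)/2)) - Y a‖ := hlip
      _ ≤ NWW * |b-a| ^ (2*α) * K * (2⁻¹ * (CY * ((b-a)/2) ^ α)) := by
          have : (0:ℝ) ≤ NWW * |b-a| ^ (2*α) * K := by positivity
          exact mul_le_mul_of_nonneg_left hdist this
      _ ≤ NWW * K * CY * (b-a) ^ (3*α) := by
          rw [abs_of_nonneg hba]
          have h1 : ((b-a)/2) ^ α ≤ (b-a) ^ α := rpow_half_le _ hba
          have h2 : (b-a) ^ (2*α) * (b-a) ^ α = (b-a) ^ (3*α) := rpow_split _ hba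
          have h4 : (0:ℝ) ≤ ((b-a)/2) ^ α := Real.rpow_nonneg (by linarith) _
          have h5 : (0:ℝ) ≤ (b-a) ^ α := Real.rpow_nonneg hba _
          have h6 : 2⁻¹ * (CY * ((b-a)/2) ^ α) ≤ CY * (b-a) ^ α := by
            linarith only [mul_le_mul_of_nonneg_left h1 hCY0, mul_nonneg hCY0 h5]
          calc NWW * (b-a) ^ (2*α) * K * (2⁻¹ * (CY * ((b-a)/2) ^ α))
              ≤ NWW * (b-a) ^ (2*α) * K * (CY * (b-a) ^ α) :=
                mul_le_mul_of_nonneg_left h6 (by positivity)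
            _ = NWW * K * CY * ((b-a) ^ (2*α) * (b-a) ^ α) := by ring
            _ = NWW * K * CY * (b-a) ^ (3*α) := by rw [h2]
  -- the sewing estimate
  have hΞzero : ∀ r ∈ Icc (0:ℝ) T, ‖Ξ r r‖ = 0 := by
    intro r hr
    have h1 := hrp.2.2.2.1 r hr r hr (Yd r) ((2⁻¹:ℝ) • (Y r + Y ((r+r)/2)))
    rw [show |r - r| = (0:ℝ) by simp, Real.zero_rpow (by positivity : (0:ℝ) < 2*α).ne'] at h1
    simp only [mul_zero, zero_mul] at h1
    have h2 : ‖WW r r (Yd r, (2⁻¹:ℝ) • (Y r + Y ((r+r)/2)))‖ = 0 :=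
      le_antisymm h1 (norm_nonneg _)
    rw [hΞdef]
    simp only [sub_self, zero_add]
    exact h2
  have sew : ∀ s ∈ Icc (0:ℝ) T, ∀ t ∈ Icc (0:ℝ) T, s ≤ t →
      ‖(Z t - Z s) - Ξ s t‖ ≤ kα * Cδ * (t-s) ^ (3*α) := by
    intro s hs t ht hst
    rcases eq_or_lt_of_le hst with heq | hlt
    · subst heq
      rw [sub_self, zero_sub, norm_neg, hΞzero s hs, sub_self,
        Real.zero_rpow (by positivity : (0:ℝ) < 3*α).ne', mul_zero]
    -- main case s < t
    · have hts0 : (0:ℝ) < t - s := by linarith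
      set d : ℕ → ℕ → ℝ := fun m i => s + i * ((t-s) / 2^m) with hddef
      have hd0 : ∀ m, d m 0 = s := by intro m; simp [hddef]
      have hdlast : ∀ m, d m (2^m) = t := by
        intro m
        rw [hddef]
        have h2 : ((2:ℝ)^m) ≠ 0 := by positivity
        push_cast
        field_simp
        ring
      have hdstep : ∀ m i, d m (i+1) - d m i = (t-s)/2^m := by
        intro m i
        rw [hddef]
        push_cast
        ring
      have hdmono : ∀ m i, d m i ≤ d m (i+1) := by
        intro m i
        have h1 := hdstep m i
        have h2 : (0:ℝ) < (t-s)/2^m := div_pos hts0 (by positivity)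
        rw [← sub_nonneg, h1]
        exact h2.le
      have hdmem : ∀ m i, i ≤ 2^m → d m i ∈ Icc (0:ℝ) T := by
        intro m i hi
        have hcast : (i:ℝ) ≤ (2:ℝ)^m := by
          have : ((i:ℕ):ℝ) ≤ ((2^m : ℕ):ℝ) := Nat.cast_le.2 hi
          simpa using this
        constructor
        · rw [hddef]
          have h2 : (0:ℝ) ≤ (i:ℝ) * ((t-s)/2^m) :=
            mul_nonneg (Nat.cast_nonneg i) (le_of_lt (div_pos hts0 (by positivity)))
          simp only
          linarith only [hs.1, h2]
        · rw [hddef]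
          have h2 : (i:ℝ) * ((t-s)/2^m) ≤ (2:ℝ)^m * ((t-s)/2^m) :=
            mul_le_mul_of_nonneg_right hcast (le_of_lt (div_pos hts0 (by positivity)))
          have h3 : (2:ℝ)^m * ((t-s)/2^m) = t - s := by field_simp
          simp only
          linarith only [ht.2, h2, h3]
      have hdmid : ∀ m i, (d m i + d m (i+1))/2 = d (m+1) (2*i+1) := by
        intro m i
        rw [hddef]
        simp only
        push_cast
        rw [pow_succ]
        field_simp
        ring
      have hd2i : ∀ m i, d m i = d (m+1) (2*i) := by
        intro m i
        rw [hddef]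
        simp only
        push_cast
        rw [pow_succ]
        field_simp
      set S : ℕ → V := fun m => ∑ i ∈ Finset.range (2^m), Ξ (d m i) (d m (i+1)) with hSdef
      have hS0 : S 0 = Ξ s t := by
        rw [hSdef]
        simp only [pow_zero, Finset.sum_range_one]
        rw [hd0, show d 0 1 = t from hdlast 0]
      have h2mne : ∀ m : ℕ, ((2:ℝ)^m) ≠ 0 := fun m => by positivity
      have hdyad : ∀ m : ℕ, (2:ℝ)^m * (((t-s)/2^m) ^ (3*α)) = (t-s)^(3*α) * q^m := by
        intro m
        rw [aux_rpow_dyadic hts0.le m, ← hqdef]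
        field_simp
      have hstep : ∀ m, ‖S (m+1) - S m‖ ≤ Cδ * (t-s)^(3*α) * q^m := by
        intro m
        have hmid_eq : ∀ i : ℕ, Ξ (d (m+1) (2*i)) (d (m+1) (2*i+1))
            + Ξ (d (m+1) (2*i+1)) (d (m+1) (2*i+1+1))
            = Ξ (d m i) ((d m i + d m (i+1))/2) + Ξ ((d m i + d m (i+1))/2) (d m (i+1)) := by
          intro i
          rw [← hdmid m i, ← hd2i m i, show 2*i+1+1 = 2*(i+1) by ring, ← hd2i m (i+1)]
        have hre : S (m+1) = ∑ i ∈ Finset.range (2^m),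
            (Ξ (d m i) ((d m i + d m (i+1))/2) + Ξ ((d m i + d m (i+1))/2) (d m (i+1))) := by
          rw [hSdef]
          simp only
          rw [pow_succ, mul_comm ((2:ℕ)^m) 2,
            aux_pair (fun j => Ξ (d (m+1) j) (d (m+1) (j+1))) (2^m)]
          exact Finset.sum_congr rfl (fun i _ => hmid_eq i)
        have hdiff : S (m+1) - S m = ∑ i ∈ Finset.range (2^m),
            ((Ξ (d m i) ((d m i + d m (i+1))/2) + Ξ ((d m i + d m (i+1))/2) (d m (i+1)))
              - Ξ (d m i) (d m (i+1))) := by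
          rw [hre, hSdef]
          simp only
          rw [← Finset.sum_sub_distrib]
        rw [hdiff]
        calc ‖∑ i ∈ Finset.range (2^m),
            ((Ξ (d m i) ((d m i + d m (i+1))/2) + Ξ ((d m i + d m (i+1))/2) (d m (i+1)))
              - Ξ (d m i) (d m (i+1)))‖
            ≤ ∑ i ∈ Finset.range (2^m),
              ‖(Ξ (d m i) ((d m i + d m (i+1))/2) + Ξ ((d m i + d m (i+1))/2) (d m (i+1)))
                - Ξ (d m i) (d m (i+1))‖ := norm_sum_le _ _
          _ ≤ ∑ _i ∈ Finset.range (2^m), Cδ * ((t-s)/2^m) ^ (3*α) := by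
              apply Finset.sum_le_sum
              intro i hi
              have hilt : i < 2^m := Finset.mem_range.1 hi
              have e : (Ξ (d m i) ((d m i + d m (i+1))/2) + Ξ ((d m i + d m (i+1))/2) (d m (i+1)))
                  - Ξ (d m i) (d m (i+1))
                  = -(Ξ (d m i) (d m (i+1)) - Ξ (d m i) ((d m i + d m (i+1))/2)
                      - Ξ ((d m i + d m (i+1))/2) (d m (i+1))) := by abel
              rw [e, norm_neg]
              have hdef := defect (d m i) (hdmem m i hilt.le) (d m (i+1))
                (hdmem m (i+1) hilt) (hdmono m i)
              rw [hdstep m i] at hdef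
              exact hdef
          _ = 2^m * (Cδ * ((t-s)/2^m) ^ (3*α)) := by
              rw [Finset.sum_const, Finset.card_range, nsmul_eq_mul]
              push_cast
              ring
          _ = Cδ * (t-s)^(3*α) * q^m := by
              rw [show (2:ℝ)^m * (Cδ * ((t-s)/2^m) ^ (3*α))
                  = Cδ * ((2:ℝ)^m * (((t-s)/2^m) ^ (3*α))) by ring, hdyad m]
              ring
      have htel : ∀ m, ‖S m - Ξ s t‖ ≤ Cδ * (t-s)^(3*α) * (∑ j ∈ Finset.range m, q^j) := by
        intro m
        induction m with
        | zero => simp [hS0]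
        | succ m ih =>
          have h1 := hstep m
          have h2 : ‖S (m+1) - Ξ s t‖ ≤ ‖S (m+1) - S m‖ + ‖S m - Ξ s t‖ := by
            have := norm_add_le (S (m+1) - S m) (S m - Ξ s t)
            simpa using this
          rw [Finset.sum_range_succ, mul_add]
          linarith only [h1, h2, ih]
      have hgeom : ∀ m : ℕ, (∑ j ∈ Finset.range m, q^j) ≤ (1-q)⁻¹ := by
        intro m
        rw [geom_sum_eq (by linarith : q ≠ 1) m]
        rw [show (q^m - 1)/(q - 1) = (1 - q^m)/(1 - q) by
          rw [div_eq_div_iff (by linarith) (by linarith)]; ring]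
        rw [inv_eq_one_div]
        apply div_le_div_of_nonneg_right _ (by linarith)
        linarith only [pow_nonneg hq0.le m]
      have hSm : ∀ m, ‖S m - Ξ s t‖ ≤ kα * Cδ * (t-s)^(3*α) := by
        intro m
        calc ‖S m - Ξ s t‖ ≤ Cδ * (t-s)^(3*α) * (∑ j ∈ Finset.range m, q^j) := htel m
          _ ≤ Cδ * (t-s)^(3*α) * (1-q)⁻¹ :=
              mul_le_mul_of_nonneg_left (hgeom m)
                (mul_nonneg hCδ0 (Real.rpow_nonneg hts0.le _))
          _ = kα * Cδ * (t-s)^(3*α) := by rw [hkαdef]; ring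
      set RS2 : ℕ → V := fun m => ∑ i ∈ Finset.range (2^m),
        ((W (d m (i+1)) (Y (d m i)) - W (d m i) (Y (d m i)))
          + WW (d m i) (d m (i+1)) (Yd (d m i), Y (d m i))) with hRS2def
      have hRS2 : ∀ m, ‖S m - RS2 m‖ ≤ NWW * K * CY * (t-s)^(3*α) * q^m := by
        intro m
        have hdiff : S m - RS2 m = ∑ i ∈ Finset.range (2^m),
            (Ξ (d m i) (d m (i+1))
              - ((W (d m (i+1)) (Y (d m i)) - W (d m i) (Y (d m i)))
                + WW (d m i) (d m (i+1)) (Yd (d m i), Y (d m i)))) := by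
          rw [hSdef, hRS2def]
          simp only
          rw [← Finset.sum_sub_distrib]
        rw [hdiff]
        calc ‖∑ i ∈ Finset.range (2^m),
            (Ξ (d m i) (d m (i+1))
              - ((W (d m (i+1)) (Y (d m i)) - W (d m i) (Y (d m i)))
                + WW (d m i) (d m (i+1)) (Yd (d m i), Y (d m i))))‖
            ≤ ∑ i ∈ Finset.range (2^m),
              ‖Ξ (d m i) (d m (i+1))
                - ((W (d m (i+1)) (Y (d m i)) - W (d m i) (Y (d m i)))
                  + WW (d m i) (d m (i+1)) (Yd (d m i), Y (d m i)))‖ := norm_sum_le _ _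
          _ ≤ ∑ _i ∈ Finset.range (2^m), (NWW * K * CY) * ((t-s)/2^m) ^ (3*α) := by
              apply Finset.sum_le_sum
              intro i hi
              have hilt : i < 2^m := Finset.mem_range.1 hi
              have hge := germ_err (d m i) (hdmem m i hilt.le) (d m (i+1))
                (hdmem m (i+1) hilt) (hdmono m i)
              rw [hdstep m i] at hge
              exact hge
          _ = 2^m * ((NWW * K * CY) * ((t-s)/2^m) ^ (3*α)) := by
              rw [Finset.sum_const, Finset.card_range, nsmul_eq_mul]
              push_cast
              ring
          _ = NWW * K * CY * (t-s)^(3*α) * q^m := by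
              rw [show (2:ℝ)^m * ((NWW * K * CY) * (((t-s)/2^m) ^ (3*α)))
                  = (NWW * K * CY) * ((2:ℝ)^m * (((t-s)/2^m) ^ (3*α))) by ring, hdyad m]
              ring
      -- conclusion via ε-argument
      apply le_of_forall_pos_le_add
      intro ε hε
      obtain ⟨δt, hδt0, hδtP⟩ := hZ t ht (ε/3) (by linarith only [hε])
      obtain ⟨δs, hδs0, hδsP⟩ := hZ s hs (ε/3) (by linarith only [hε])
      set δm : ℝ := min δs δt with hδmdef
      have hδm0 : 0 < δm := lt_min hδs0 hδt0
      -- a fine partition of [0, s]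
      have hP0 : ∃ P₀ : TimePartition 0 s, ∀ k < P₀.n, P₀.pts (k+1) - P₀.pts k < δm := by
        rcases eq_or_lt_of_le hs.1 with hs0 | hs0
        · exact ⟨⟨0, fun _ => 0, rfl, hs0, fun k hk => absurd hk (Nat.not_lt_zero k)⟩,
            fun k hk => absurd hk (Nat.not_lt_zero k)⟩
        · obtain ⟨n₀, hn₀⟩ := exists_nat_gt (s / δm)
          have hn₀0 : (0:ℝ) < (n₀:ℝ) := lt_trans (div_pos hs0 hδm0) hn₀
          have hn₀ne : ((n₀:ℝ)) ≠ 0 := hn₀0.ne'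
          have hgap : s / n₀ < δm := by
            rw [div_lt_iff₀ hn₀0]
            rw [div_lt_iff₀ hδm0] at hn₀
            linarith only [hn₀]
          refine ⟨⟨n₀, fun k => (min k n₀ : ℕ) * s / n₀, by simp, ?_, ?_⟩, ?_⟩
          · simp only [min_self]
            field_simp
          · intro k hk
            have e1 : min k n₀ = k := min_eq_left hk.le
            have e2 : min (k+1) n₀ = k+1 := min_eq_left hk
            simp only [e1, e2]
            have hlt : ((k:ℝ)) * s < ((k:ℝ)+1) * s := by nlinarith only [hs0]
            rw [div_lt_div_iff_of_pos_right hn₀0]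
            push_cast
            linarith only [hlt]
          · intro k hk
            simp only
            have e1 : min k n₀ = k := min_eq_left hk.le
            have e2 : min (k+1) n₀ = k+1 := min_eq_left hk
            rw [e1, e2]
            have e3 : ((k:ℕ)+1 : ℝ) * s / n₀ - (k:ℝ) * s / n₀ = s / n₀ := by
              field_simp
              ring
            push_cast
            push_cast at e3
            rw [e3]
            exact hgap
      obtain ⟨P₀, hP₀mesh⟩ := hP0
      -- choose m
      have hm : ∃ m : ℕ, (t-s)/2^m < δt ∧
          q^m * (NWW * K * CY * (t-s)^(3*α)) ≤ ε/3 ∧ q^m * (NWW * K * CY * (t-s)^(3*α)) ≤ ε/3 := by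
        obtain ⟨m1, hm1⟩ := pow_unbounded_of_one_lt ((t-s)/δt) (by norm_num : (1:ℝ) < 2)
        have hCq0 : (0:ℝ) ≤ NWW * K * CY * (t-s)^(3*α) := by
          have := Real.rpow_nonneg hts0.le (3*α)
          positivity
        have hex2 : ∃ m2 : ℕ, q^m2 * (NWW * K * CY * (t-s)^(3*α)) ≤ ε/3 := by
          rcases eq_or_lt_of_le hCq0 with hCq | hCq
          · exact ⟨0, by rw [← hCq]; simp; linarith only [hε]⟩
          · obtain ⟨m2, hm2⟩ := exists_pow_lt_of_lt_one
              (div_pos (by linarith only [hε] : (0:ℝ) < ε/3) hCq) hq1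
            refine ⟨m2, ?_⟩
            rw [lt_div_iff₀ hCq] at hm2
            linarith only [hm2]
        obtain ⟨m2, hm2⟩ := hex2
        refine ⟨max m1 m2, ?_, ?_, ?_⟩
        · have hp : (2:ℝ)^m1 ≤ (2:ℝ)^(max m1 m2) :=
            pow_le_pow_right₀ (by norm_num) (le_max_left _ _)
          have h1 : (t-s)/2^(max m1 m2) ≤ (t-s)/2^m1 := by
            apply div_le_div_of_nonneg_left hts0.le (by positivity) hp
          have h2 : (t-s)/2^m1 < δt := by
            rw [div_lt_iff₀ (by positivity)]
            rw [div_lt_iff₀ hδt0] at hm1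
            linarith only [hm1]
          linarith only [h1, h2]
        all_goals {
          have hq' : q^(max m1 m2) ≤ q^m2 :=
            pow_le_pow_of_le_one hq0.le hq1.le (le_max_right _ _)
          have := mul_le_mul_of_nonneg_right hq' hCq0
          linarith only [this, hm2] }
      obtain ⟨m, hmesh, hqsmall, -⟩ := hm
      -- the concatenated partition of [0, t]
      have hQ : ∃ Q : TimePartition 0 t, (∀ k < Q.n, Q.pts (k+1) - Q.pts k < δt) ∧
          riemannSum W WW Y Yd Q = riemannSum W WW Y Yd P₀ + RS2 m := by
        set qpts : ℕ → ℝ :=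
          fun k => if k < P₀.n then P₀.pts k else d m (min (k - P₀.n) (2^m)) with hqpts
        have hqeq : ∀ k ≤ P₀.n, qpts k = P₀.pts k := by
          intro k hk
          rcases lt_or_eq_of_le hk with h1 | h1
          · simp only [hqpts, if_pos h1]
          · rw [h1]
            simp only [hqpts, if_neg (lt_irrefl P₀.n)]
            rw [Nat.sub_self, show min 0 (2^m) = 0 by simp, hd0, P₀.last]
        have hqd : ∀ i ≤ 2^m, qpts (P₀.n + i) = d m i := by
          intro i hi
          have h1 : ¬ (P₀.n + i < P₀.n) := by omega
          simp only [hqpts, if_neg h1]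
          rw [show P₀.n + i - P₀.n = i by omega, min_eq_left hi]
        have hfirst : qpts 0 = 0 := by
          rw [hqeq 0 (Nat.zero_le _), P₀.first]
        have hlast : qpts (P₀.n + 2^m) = t := by
          rw [hqd (2^m) le_rfl, hdlast]
        have hmono : ∀ k < P₀.n + 2^m, qpts k < qpts (k+1) := by
          intro k hk
          by_cases h2 : k < P₀.n
          · rw [hqeq k h2.le, hqeq (k+1) h2]
            exact P₀.mono k h2
          · have h3 : P₀.n ≤ k := le_of_not_gt h2
            obtain ⟨i, rfl⟩ : ∃ i, k = P₀.n + i := ⟨k - P₀.n, by omega⟩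
            have hi : i < 2^m := by omega
            rw [hqd i hi.le, show P₀.n + i + 1 = P₀.n + (i+1) by omega, hqd (i+1) hi]
            have h5 := hdstep m i
            have hp : (0:ℝ) < (t-s)/2^m := div_pos hts0 (by positivity)
            rw [← sub_pos, h5]
            exact hp
        refine ⟨⟨P₀.n + 2^m, qpts, hfirst, hlast, hmono⟩, ?_, ?_⟩
        · intro k hk
          simp only at hk ⊢
          by_cases h1 : k + 1 ≤ P₀.n
          · have h2 : k < P₀.n := by omega
            rw [hqeq k h2.le, hqeq (k+1) h1]
            exact lt_of_lt_of_le (hP₀mesh k h2) (min_le_right _ _)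
          · have h3 : P₀.n ≤ k := by omega
            obtain ⟨i, rfl⟩ : ∃ i, k = P₀.n + i := ⟨k - P₀.n, by omega⟩
            have hi : i < 2^m := by omega
            rw [hqd i hi.le, show P₀.n + i + 1 = P₀.n + (i+1) by omega, hqd (i+1) hi]
            rw [hdstep m i]
            exact hmesh
        · show (∑ k ∈ Finset.range (P₀.n + 2^m),
              ((W (qpts (k+1)) (Y (qpts k)) - W (qpts k) (Y (qpts k)))
                + WW (qpts k) (qpts (k+1)) (Yd (qpts k), Y (qpts k))))
            = riemannSum W WW Y Yd P₀ + RS2 m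
          rw [Finset.sum_range_add]
          congr 1
          · apply Finset.sum_congr rfl
            intro k hk
            have h2 : k < P₀.n := Finset.mem_range.1 hk
            rw [hqeq k h2.le, hqeq (k+1) h2]
          · rw [hRS2def]
            apply Finset.sum_congr rfl
            intro i hi
            have h2 : i < 2^m := Finset.mem_range.1 hi
            rw [hqd i h2.le, show P₀.n + i + 1 = P₀.n + (i+1) by omega, hqd (i+1) h2]
      obtain ⟨Q, hQmesh, hQsum⟩ := hQ
      have hZt := hδtP Q hQmesh
      have hZs := hδsP P₀ (fun k hk => lt_of_lt_of_le (hP₀mesh k hk) (min_le_left _ _))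
      have hZdiff : ‖RS2 m - (Z t - Z s)‖ ≤ ε/3 + ε/3 := by
        have e : RS2 m - (Z t - Z s)
            = (riemannSum W WW Y Yd Q - Z t) - (riemannSum W WW Y Yd P₀ - Z s) := by
          rw [hQsum]; abel
        rw [e]
        calc ‖(riemannSum W WW Y Yd Q - Z t) - (riemannSum W WW Y Yd P₀ - Z s)‖
            ≤ ‖riemannSum W WW Y Yd Q - Z t‖ + ‖riemannSum W WW Y Yd P₀ - Z s‖ :=
              norm_sub_le _ _
          _ ≤ ε/3 + ε/3 := add_le_add hZt hZs
      calc ‖(Z t - Z s) - Ξ s t‖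
          ≤ ‖RS2 m - (Z t - Z s)‖ + ‖S m - RS2 m‖ + ‖S m - Ξ s t‖ := by
            have e : (Z t - Z s) - Ξ s t
                = -(RS2 m - (Z t - Z s)) - (S m - RS2 m) + (S m - Ξ s t) := by abel
            rw [e]
            have n1 := norm_add_le (-(RS2 m - (Z t - Z s)) - (S m - RS2 m)) (S m - Ξ s t)
            have n2 := norm_sub_le (-(RS2 m - (Z t - Z s))) (S m - RS2 m)
            rw [norm_neg] at n2
            linarith only [n1, n2]
        _ ≤ (ε/3 + ε/3) + (NWW * K * CY * (t-s)^(3*α) * q^m) + (kα * Cδ * (t-s)^(3*α)) :=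
            add_le_add (add_le_add hZdiff (hRS2 m)) (hSm m)
        _ ≤ kα * Cδ * (t-s)^(3*α) + ε := by
            have : NWW * K * CY * (t-s)^(3*α) * q^m = q^m * (NWW * K * CY * (t-s)^(3*α)) := by ring
            rw [this]
            linarith only [hqsmall]
  -- final bound on the remainder
  have main : ∀ s ∈ Icc (0:ℝ) T, ∀ t ∈ Icc (0:ℝ) T, s ≤ t →
      ‖Z t - Z s - (W t (Y s) - W s (Y s))‖
        ≤ kα * (NW + NWW) * (1 + 2 * MYd) ^ b01 * (1 + 2 * MY) ^ b12
            * (1 + T ^ α * (CY + CYd + CR)) * |t - s| ^ (2 * α) := by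
    intro s hs t ht hst
    have hts : (0:ℝ) ≤ t - s := by linarith
    have hmidmem : (s+t)/2 ∈ Icc (0:ℝ) T := ⟨by linarith [hs.1, ht.1], by linarith [hs.2, ht.2]⟩
    set K2 : ℝ := (1 + 2*MYd) ^ b01 * (1 + 2*MY) ^ b12 with hK2def
    have hK20 : (0:ℝ) ≤ K2 := by positivity
    have hKK2 : K ≤ K2 := by
      rw [hKdef, hK2def]
      have h1 : (1 + MYd) ^ b01 ≤ (1 + 2*MYd) ^ b01 :=
        Real.rpow_le_rpow (by linarith) (by linarith) hb01
      have h2 : (1 + MY) ^ b12 ≤ (1 + 2*MY) ^ b12 :=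
        Real.rpow_le_rpow (by linarith) (by linarith) hb12
      exact mul_le_mul h1 h2 (by positivity) (by positivity)
    have hWWb : ‖WW s t (Yd s, (2⁻¹:ℝ) • (Y s + Y ((s+t)/2)))‖
        ≤ NWW * (t-s)^(2*α) * K2 := by
      have h1 := hrp.2.2.2.1 s hs t ht (Yd s) ((2⁻¹:ℝ) • (Y s + Y ((s+t)/2)))
      rw [show |t - s| = t - s from abs_of_nonneg hts] at h1
      have hβ0 : 0 ≤ β 0 := hβ 0 (by norm_num)
      have e1 : (1 + ‖Yd s‖) ^ (β 0) ≤ (1 + 2*MYd) ^ b01 := by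
        calc (1 + ‖Yd s‖) ^ (β 0) ≤ (1 + 2*MYd) ^ (β 0) :=
              Real.rpow_le_rpow (by positivity) (by linarith [hMYd s hs]) hβ0
          _ ≤ (1 + 2*MYd) ^ b01 :=
              Real.rpow_le_rpow_of_exponent_le (by linarith) (le_max_left _ _)
      have e2 : (1 + ‖(2⁻¹:ℝ) • (Y s + Y ((s+t)/2))‖) ^ (β 1) ≤ (1 + 2*MY) ^ b12 := by
        have hg := hmid_norm _ _ (hMY s hs) (hMY _ hmidmem)
        calc (1 + ‖(2⁻¹:ℝ) • (Y s + Y ((s+t)/2))‖) ^ (β 1) ≤ (1 + 2*MY) ^ (β 1) :=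
              Real.rpow_le_rpow (by positivity) (by linarith) hβ1
          _ ≤ (1 + 2*MY) ^ b12 :=
              Real.rpow_le_rpow_of_exponent_le (by linarith) (le_max_left _ _)
      calc ‖WW s t (Yd s, (2⁻¹:ℝ) • (Y s + Y ((s+t)/2)))‖
          ≤ NWW * (t-s)^(2*α) * (1 + ‖Yd s‖) ^ (β 0)
              * (1 + ‖(2⁻¹:ℝ) • (Y s + Y ((s+t)/2))‖) ^ (β 1) := h1
        _ ≤ NWW * (t-s)^(2*α) * (1 + 2*MYd) ^ b01 * (1 + 2*MY) ^ b12 := by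
            have h0 : (0:ℝ) ≤ NWW * (t-s)^(2*α) := by positivity
            gcongr
        _ = NWW * (t-s)^(2*α) * K2 := by rw [hK2def]; ring
    have hdecomp : Z t - Z s - (W t (Y s) - W s (Y s))
        = ((Z t - Z s) - Ξ s t) + WW s t (Yd s, (2⁻¹:ℝ) • (Y s + Y ((s+t)/2))) := by
      rw [hΞdef]
      beta_reduce
      abel
    have hsew := sew s hs t ht hst
    have h3α : (t-s)^(3*α) ≤ (t-s)^(2*α) * T^α := by
      rw [← rpow_split _ hts]
      apply mul_le_mul_of_nonneg_left _ (Real.rpow_nonneg hts _)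
      exact Real.rpow_le_rpow hts (by linarith [hs.1, ht.2]) hα0.le
    have hcoeff : kα * Cδ * T^α + NWW * K2 ≤ kα * (NW + NWW) * K2 * (1 + T^α * (CY+CYd+CR)) := by
      rw [hCδdef]
      have hTα0 : (0:ℝ) ≤ T^α := Real.rpow_nonneg hT.le _
      have hC0 : (0:ℝ) ≤ CY + CYd + CR := by linarith only [hCY0, hCYd0, hCR0]
      have t1 : kα * (K * (NW+NWW) * (CY+CYd+CR)) * T^α
          ≤ kα * (NW+NWW) * K2 * (T^α * (CY+CYd+CR)) := by
        have hnn : (0:ℝ) ≤ kα * (NW+NWW) * (CY+CYd+CR) * T^α :=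
          mul_nonneg (mul_nonneg (mul_nonneg hkα0.le (by linarith only [hNW, hNWW])) hC0) hTα0
        calc kα * (K * (NW+NWW) * (CY+CYd+CR)) * T^α
            = (kα * (NW+NWW) * (CY+CYd+CR) * T^α) * K := by ring
          _ ≤ (kα * (NW+NWW) * (CY+CYd+CR) * T^α) * K2 :=
              mul_le_mul_of_nonneg_left hKK2 hnn
          _ = kα * (NW+NWW) * K2 * (T^α * (CY+CYd+CR)) := by ring
      have t2 : NWW * K2 ≤ kα * (NW+NWW) * K2 := by
        apply mul_le_mul_of_nonneg_right _ hK20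
        calc NWW ≤ NW + NWW := by linarith only [hNW]
          _ ≤ kα * (NW + NWW) := le_mul_of_one_le_left (by linarith only [hNW, hNWW]) hkα1
      calc kα * (K * (NW+NWW) * (CY+CYd+CR)) * T^α + NWW * K2
          ≤ kα * (NW+NWW) * K2 * (T^α * (CY+CYd+CR)) + kα * (NW+NWW) * K2 := by
            linarith only [t1, t2]
        _ = kα * (NW+NWW) * K2 * (1 + T^α * (CY+CYd+CR)) := by ring
    have h2α0 : (0:ℝ) ≤ (t-s)^(2*α) := Real.rpow_nonneg hts _
    calc ‖Z t - Z s - (W t (Y s) - W s (Y s))‖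
        = ‖((Z t - Z s) - Ξ s t) + WW s t (Yd s, (2⁻¹:ℝ) • (Y s + Y ((s+t)/2)))‖ := by
          rw [hdecomp]
      _ ≤ ‖(Z t - Z s) - Ξ s t‖ + ‖WW s t (Yd s, (2⁻¹:ℝ) • (Y s + Y ((s+t)/2)))‖ :=
          norm_add_le _ _
      _ ≤ kα * Cδ * (t-s)^(3*α) + NWW * (t-s)^(2*α) * K2 := add_le_add hsew hWWb
      _ ≤ (kα * Cδ * T^α + NWW * K2) * (t-s)^(2*α) := by
          have h1 : kα * Cδ * (t-s)^(3*α) ≤ kα * Cδ * ((t-s)^(2*α) * T^α) :=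
            mul_le_mul_of_nonneg_left h3α (mul_nonneg hkα0.le hCδ0)
          nlinarith only [h1]
      _ ≤ (kα * (NW+NWW) * K2 * (1 + T^α * (CY+CYd+CR))) * (t-s)^(2*α) :=
          mul_le_mul_of_nonneg_right hcoeff h2α0
      _ = kα * (NW + NWW) * (1 + 2 * MYd) ^ b01 * (1 + 2 * MY) ^ b12
            * (1 + T ^ α * (CY + CYd + CR)) * |t - s| ^ (2 * α) := by
          rw [show |t - s| = t - s from abs_of_nonneg hts, hK2def]
          ring
  refine ⟨?_, main⟩
  -- Hölder continuity of Z
  set CZmain : ℝ := kα * (NW + NWW) * (1 + 2 * MYd) ^ b01 * (1 + 2 * MY) ^ b12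
      * (1 + T ^ α * (CY + CYd + CR)) with hCZmaindef
  have hCZmain0 : 0 ≤ CZmain := by
    have hTα0 : (0:ℝ) ≤ T^α := Real.rpow_nonneg hT.le _
    have h1 : (0:ℝ) ≤ (1 + 2*MYd) ^ b01 := by positivity
    have h2 : (0:ℝ) ≤ (1 + 2*MY) ^ b12 := by positivity
    rw [hCZmaindef]
    have : (0:ℝ) ≤ 1 + T^α * (CY + CYd + CR) := by nlinarith only [hTα0, hCY0, hCYd0, hCR0]
    have hk2 : (0:ℝ) ≤ kα * (NW + NWW) := mul_nonneg hkα0.le (by linarith only [hNW, hNWW])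
    positivity
  set CZ : ℝ := CZmain * T^α + NW * (1 + MY) ^ (β 0) with hCZdef
  have holder : ∀ s ∈ Icc (0:ℝ) T, ∀ t ∈ Icc (0:ℝ) T, s ≤ t →
      ‖Z t - Z s‖ ≤ CZ * |t - s| ^ α := by
    intro s hs t ht hst
    have hts : (0:ℝ) ≤ t - s := by linarith
    have hβ0 : 0 ≤ β 0 := hβ 0 (by norm_num)
    have hW0 : ‖W t (Y s) - W s (Y s)‖ ≤ NW * (1 + MY) ^ (β 0) * |t - s| ^ α := by
      have h1 := hrp.2.1 0 (by norm_num) s hs t ht (Y s)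
      rw [norm_iteratedFDeriv_zero] at h1
      calc ‖W t (Y s) - W s (Y s)‖ ≤ NW * |t - s| ^ α * (1 + ‖Y s‖) ^ (β 0) := h1
        _ ≤ NW * |t - s| ^ α * (1 + MY) ^ (β 0) := by
            have := Real.rpow_le_rpow (by positivity : (0:ℝ) ≤ 1 + ‖Y s‖)
              (by linarith [hMY s hs] : 1 + ‖Y s‖ ≤ 1 + MY) hβ0
            exact mul_le_mul_of_nonneg_left this (by positivity)
        _ = NW * (1 + MY) ^ (β 0) * |t - s| ^ α := by ring
    have hmain := main s hs t ht hst
    have h2α : |t - s| ^ (2*α) ≤ T^α * |t - s| ^ α := by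
      rw [show |t - s| = t - s from abs_of_nonneg hts, rpow_twoα _ hts]
      apply mul_le_mul_of_nonneg_right _ (Real.rpow_nonneg hts _)
      exact Real.rpow_le_rpow hts (by linarith [hs.1, ht.2]) hα0.le
    calc ‖Z t - Z s‖
        ≤ ‖Z t - Z s - (W t (Y s) - W s (Y s))‖ + ‖W t (Y s) - W s (Y s)‖ := by
          have := norm_add_le (Z t - Z s - (W t (Y s) - W s (Y s))) (W t (Y s) - W s (Y s))
          simpa using this
      _ ≤ CZmain * |t - s| ^ (2*α) + NW * (1 + MY) ^ (β 0) * |t - s| ^ α := by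
          apply add_le_add _ hW0
          calc ‖Z t - Z s - (W t (Y s) - W s (Y s))‖
              ≤ kα * (NW + NWW) * (1 + 2 * MYd) ^ b01 * (1 + 2 * MY) ^ b12
                  * (1 + T ^ α * (CY + CYd + CR)) * |t - s| ^ (2 * α) := hmain
            _ = CZmain * |t - s| ^ (2*α) := by rw [hCZmaindef]
      _ ≤ CZmain * (T^α * |t - s| ^ α) + NW * (1 + MY) ^ (β 0) * |t - s| ^ α := by
          have := mul_le_mul_of_nonneg_left h2α hCZmain0
          linarith only [this]
      _ = CZ * |t - s| ^ α := by rw [hCZdef]; ring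
  refine ⟨CZ, ?_⟩
  intro s hs t ht
  rcases le_total s t with hst | hst
  · exact holder s hs t ht hst
  · have := holder t ht s hs hst
    rw [norm_sub_rev, abs_sub_comm] at this
    exact this
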